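/- Let Γ ⊂ Ω be a finite maximal antichain, let n ∈ ℕ with n ≥ card(Γ), and let 0 < r < ∞. Then, with L := η^3 ξ^{3h}, V_{n,r}(μ_h) ≤ inf{ L Σ_{σ∈Γ} μ_h(J_σ) ‖φ'_σ‖^r V_{n_σ,r}(μ_h) : (n_σ)_{σ∈Γ} positive integers with Σ_{σ∈Γ} n_σ ≤ n }. -/

import Mathlib

open MeasureTheory Filter Metric

noncomputable section

/-- A cookie-cutter system on `J = [0,1]`. -/
structure CookieCutter where
  N : ℕ
  hN : 2 ≤ N
  Jsub : Fin N → Set ℝ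
  f : ℝ → ℝ
  φ : Fin N → ℝ → ℝ
  c : ℝ
  γ : ℝ
  b : ℝ
  B : ℝ
  hJsub_sub : ∀ j, Jsub j ⊆ Set.Icc 0 1
  hJsub_interval : ∀ j, ∃ u v : ℝ, u ≤ v ∧ Jsub j = Set.Icc u v
  hJsub_disj : ∀ i j, i ≠ j → Disjoint (Jsub i) (Jsub j)
  hbij : ∀ j, Set.BijOn f (Jsub j) (Set.Icc 0 1)
  hφ_maps : ∀ j, ∀ x ∈ Set.Icc (0:ℝ) 1, φ j x ∈ Jsub j
  hφ_rinv : ∀ j, ∀ x ∈ Set.Icc (0:ℝ) 1, f (φ j x) = x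
  hφ_linv : ∀ j, ∀ x ∈ Jsub j, φ j (f x) = x
  hfdiff : ∀ j, ∀ x ∈ Jsub j, DifferentiableAt ℝ f x
  hφdiff : ∀ j, ∀ x ∈ Set.Icc (0:ℝ) 1, DifferentiableAt ℝ (φ j) x
  hc : 0 < c
  hγ : γ ∈ Set.Ioc (0:ℝ) 1
  hHolder : ∀ j, ∀ x ∈ Jsub j, ∀ y ∈ Jsub j, |deriv f x - deriv f y| ≤ c * |x - y| ^ γ
  hb : IsGLB ((fun x => |deriv f x|) '' ⋃ j, Jsub j) b
  hB : IsLUB ((fun x => |deriv f x|) '' ⋃ j, Jsub j) B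
  hb1 : 1 < b

namespace CookieCutter

variable (cc : CookieCutter)

/-- `φ_σ = φ_{σ_1} ∘ ⋯ ∘ φ_{σ_n}` for a word `σ`. -/
def wordMap : List (Fin cc.N) → ℝ → ℝ
  | [] => id
  | j :: rest => cc.φ j ∘ wordMap rest

/-- The basic interval `J_σ = φ_σ(J)`. -/
def Jc (σ : List (Fin cc.N)) : Set ℝ := cc.wordMap σ '' Set.Icc 0 1

/-- The diameter `|J_σ|`. -/
def diamJ (σ : List (Fin cc.N)) : ℝ := Metric.diam (cc.Jc σ)

/-- `‖φ'_σ‖ = sup_{x ∈ J} |φ'_σ(x)|`. -/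
def φnorm (σ : List (Fin cc.N)) : ℝ :=
  sSup ((fun x => |deriv (cc.wordMap σ) x|) '' Set.Icc 0 1)

/-- The distortion constant `ξ = exp (c / (b^γ − 1))`. -/
def xi : ℝ := Real.exp (cc.c / (cc.b ^ cc.γ - 1))

/-- The cookie-cutter set `E = ⋂_{n ≥ 1} ⋃_{σ ∈ Ω_n} J_σ`. -/
def E : Set ℝ := ⋂ (n : ℕ) (_ : 1 ≤ n), ⋃ σ : Fin n → Fin cc.N, cc.Jc (List.ofFn σ)

/-- `η = ξ^{9h}`. -/
def eta (h : ℝ) : ℝ := cc.xi ^ ((9:ℝ) * h)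

/-- `L = η³ ξ^{3h}`. -/
def Lconst (h : ℝ) : ℝ := (cc.eta h) ^ 3 * cc.xi ^ ((3:ℝ) * h)

/-- A Gibbs-like measure for the cookie-cutter system: a Borel probability measure
supported on `E` with `η⁻¹|J_σ|^h ≤ μ(J_σ) ≤ η|J_σ|^h` for every word `σ`. -/
def IsGibbsLike (μ : Measure ℝ) (h : ℝ) : Prop :=
  IsProbabilityMeasure μ ∧ μ (cc.Eᶜ) = 0 ∧
    ∀ σ : List (Fin cc.N), σ ≠ [] →
      (cc.eta h)⁻¹ * cc.diamJ σ ^ h ≤ (μ (cc.Jc σ)).toReal ∧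
      (μ (cc.Jc σ)).toReal ≤ cc.eta h * cc.diamJ σ ^ h

/-- A finite maximal antichain in `Ω`. -/
def IsFMA (Γ : Finset (List (Fin cc.N))) : Prop :=
  (∀ σ ∈ Γ, σ ≠ []) ∧
  (∀ ω : ℕ → Fin cc.N, ∃ k : ℕ, 1 ≤ k ∧ (List.ofFn fun i : Fin k => ω i) ∈ Γ) ∧
  ∀ σ ∈ Γ, ∀ τ ∈ Γ, σ <+: τ → σ = τ

end CookieCutter

/-- The `n`-th quantization error of order `r`. -/
def Vnr (μ : Measure ℝ) (n : ℕ) (r : ℝ) : ℝ :=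
  sInf ((fun α : Finset ℝ => ∫ x, Metric.infDist x (α : Set ℝ) ^ r ∂μ) ''
    {α : Finset ℝ | α.Nonempty ∧ α.card ≤ n})

/-- The auxiliary quantization error `u_{n,r}` with `U = (0,1)`. -/
def unr (μ : Measure ℝ) (n : ℕ) (r : ℝ) : ℝ :=
  sInf ((fun α : Finset ℝ =>
      ∫ x, Metric.infDist x ((α : Set ℝ) ∪ (Set.Ioo (0:ℝ) 1)ᶜ) ^ r ∂μ) ''
    {α : Finset ℝ | α.card ≤ n})


/-! ### Auxiliary lemmas -/

namespace CookieCutter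

variable (cc : CookieCutter)

local notation "J01" => Set.Icc (0:ℝ) 1

lemma Jsub_nonempty (j : Fin cc.N) : (cc.Jsub j).Nonempty := by
  obtain ⟨u, v, huv, hset⟩ := cc.hJsub_interval j
  exact ⟨u, by simp [hset, huv]⟩

lemma b_pos : 0 < cc.b := lt_trans one_pos cc.hb1

lemma b_le_B : cc.b ≤ cc.B := by
  obtain ⟨x, hx⟩ := cc.Jsub_nonempty ⟨0, by have := cc.hN; omega⟩
  have hxm : |deriv cc.f x| ∈ (fun x => |deriv cc.f x|) '' ⋃ j, cc.Jsub j :=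
    ⟨x, Set.mem_iUnion.2 ⟨_, hx⟩, rfl⟩
  exact le_trans (cc.hb.1 hxm) (cc.hB.1 hxm)

lemma B_pos : 0 < cc.B := lt_of_lt_of_le cc.b_pos cc.b_le_B

lemma one_lt_b_rpow : 1 < cc.b ^ cc.γ := by
  rw [Real.one_lt_rpow_iff_of_pos cc.b_pos]
  exact Or.inl ⟨cc.hb1, cc.hγ.1⟩

lemma xi_pos : 0 < cc.xi := Real.exp_pos _

lemma one_le_xi : 1 ≤ cc.xi := by
  have h1 : 0 < cc.b ^ cc.γ - 1 := by linarith [cc.one_lt_b_rpow]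
  have h2 : (0:ℝ) ≤ cc.c / (cc.b ^ cc.γ - 1) := div_nonneg cc.hc.le h1.le
  calc (1:ℝ) = Real.exp 0 := Real.exp_zero.symm
  _ ≤ cc.xi := Real.exp_le_exp.2 h2

lemma eta_pos (h : ℝ) : 0 < cc.eta h := Real.rpow_pos_of_pos cc.xi_pos _

lemma deriv_f_lb {j : Fin cc.N} {x : ℝ} (hx : x ∈ cc.Jsub j) : cc.b ≤ |deriv cc.f x| :=
  cc.hb.1 ⟨x, Set.mem_iUnion.2 ⟨j, hx⟩, rfl⟩

lemma deriv_f_ub {j : Fin cc.N} {x : ℝ} (hx : x ∈ cc.Jsub j) : |deriv cc.f x| ≤ cc.B :=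
  cc.hB.1 ⟨x, Set.mem_iUnion.2 ⟨j, hx⟩, rfl⟩

lemma phi_chain (j : Fin cc.N) {s : ℝ} (hs : s ∈ J01) :
    deriv cc.f (cc.φ j s) * deriv (cc.φ j) s = 1 := by
  have hφs := cc.hφ_maps j s hs
  have hcomp : HasDerivAt (cc.f ∘ cc.φ j) (deriv cc.f (cc.φ j s) * deriv (cc.φ j) s) s :=
    ((cc.hfdiff j _ hφs).hasDerivAt).comp s ((cc.hφdiff j s hs).hasDerivAt)
  have h1 : HasDerivWithinAt id (deriv cc.f (cc.φ j s) * deriv (cc.φ j) s) J01 s :=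
    (hcomp.hasDerivWithinAt).congr (fun y hy => (cc.hφ_rinv j y hy).symm)
      (cc.hφ_rinv j s hs).symm
  have h2 := h1.derivWithin (uniqueDiffOn_Icc_zero_one s hs)
  have h3 := (hasDerivWithinAt_id s J01).derivWithin (uniqueDiffOn_Icc_zero_one s hs)
  exact h2.symm.trans h3

lemma deriv_phi_bounds (j : Fin cc.N) {s : ℝ} (hs : s ∈ J01) :
    1/cc.B ≤ |deriv (cc.φ j) s| ∧ |deriv (cc.φ j) s| ≤ 1/cc.b := by
  have hφs := cc.hφ_maps j s hs
  have h1 := cc.phi_chain j hs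
  have hlb := cc.deriv_f_lb hφs
  have hub := cc.deriv_f_ub hφs
  have h2 : |deriv cc.f (cc.φ j s)| * |deriv (cc.φ j) s| = 1 := by
    rw [← abs_mul, h1, abs_one]
  have hfpos : 0 < |deriv cc.f (cc.φ j s)| := lt_of_lt_of_le cc.b_pos hlb
  have h3 : |deriv (cc.φ j) s| = 1 / |deriv cc.f (cc.φ j s)| :=
    eq_one_div_of_mul_eq_one_left (by rwa [mul_comm] at h2)
  constructor
  · rw [h3]
    exact one_div_le_one_div_of_le hfpos hub
  · rw [h3]
    exact one_div_le_one_div_of_le cc.b_pos hlb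

lemma wordMap_nil : cc.wordMap ([] : List (Fin cc.N)) = id := rfl

lemma wordMap_cons (j : Fin cc.N) (σ : List (Fin cc.N)) :
    cc.wordMap (j :: σ) = cc.φ j ∘ cc.wordMap σ := rfl

lemma wordMap_append (σ τ : List (Fin cc.N)) :
    cc.wordMap (σ ++ τ) = cc.wordMap σ ∘ cc.wordMap τ := by
  induction σ with
  | nil => rfl
  | cons j ρ ih =>
    show cc.wordMap (j :: (ρ ++ τ)) = _
    rw [wordMap_cons, ih]
    rfl

lemma wordMap_mem (σ : List (Fin cc.N)) {x : ℝ} (hx : x ∈ J01) : cc.wordMap σ x ∈ J01 := by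
  induction σ with
  | nil => exact hx
  | cons j ρ ih => exact cc.hJsub_sub j (cc.hφ_maps j _ ih)

lemma wordMap_deriv (σ : List (Fin cc.N)) {x : ℝ} (hx : x ∈ J01) :
    HasDerivAt (cc.wordMap σ) (deriv (cc.wordMap σ) x) x ∧
    (1/cc.B) ^ σ.length ≤ |deriv (cc.wordMap σ) x| ∧
    |deriv (cc.wordMap σ) x| ≤ (1/cc.b) ^ σ.length := by
  induction σ with
  | nil =>
    have h1 : deriv (cc.wordMap ([] : List (Fin cc.N))) x = 1 := by
      show deriv id x = 1; simp
    refine ⟨?_, ?_, ?_⟩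
    · rw [h1]; exact hasDerivAt_id x
    · rw [h1]; simp
    · rw [h1]; simp
  | cons j ρ ih =>
    have hu01 : cc.wordMap ρ x ∈ J01 := cc.wordMap_mem ρ hx
    have hφd := (cc.hφdiff j _ hu01).hasDerivAt
    have hcomp : HasDerivAt (cc.wordMap (j :: ρ))
        (deriv (cc.φ j) (cc.wordMap ρ x) * deriv (cc.wordMap ρ) x) x :=
      HasDerivAt.comp x hφd ih.1
    have hderiv : deriv (cc.wordMap (j :: ρ)) x
        = deriv (cc.φ j) (cc.wordMap ρ x) * deriv (cc.wordMap ρ) x := hcomp.deriv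
    obtain ⟨hφlb, hφub⟩ := cc.deriv_phi_bounds j hu01
    have hB0 : (0:ℝ) < 1/cc.B := by have := cc.B_pos; positivity
    have hb0 : (0:ℝ) < 1/cc.b := by have := cc.b_pos; positivity
    refine ⟨hderiv ▸ hcomp, ?_, ?_⟩
    · rw [hderiv, abs_mul]
      calc (1/cc.B) ^ (j :: ρ).length = (1/cc.B) ^ ρ.length * (1/cc.B) := by
            rw [List.length_cons, pow_succ]
      _ ≤ |deriv (cc.wordMap ρ) x| * |deriv (cc.φ j) (cc.wordMap ρ x)| :=
            mul_le_mul ih.2.1 hφlb hB0.le (abs_nonneg _)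
      _ = |deriv (cc.φ j) (cc.wordMap ρ x)| * |deriv (cc.wordMap ρ) x| := mul_comm _ _
    · rw [hderiv, abs_mul]
      calc |deriv (cc.φ j) (cc.wordMap ρ x)| * |deriv (cc.wordMap ρ) x|
          ≤ (1/cc.b) * (1/cc.b) ^ ρ.length :=
            mul_le_mul hφub ih.2.2 (abs_nonneg _) hb0.le
      _ = (1/cc.b) ^ (j :: ρ).length := by rw [List.length_cons, pow_succ, mul_comm]

lemma deriv_wordMap_pos (σ : List (Fin cc.N)) {x : ℝ} (hx : x ∈ J01) :
    0 < |deriv (cc.wordMap σ) x| :=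
  lt_of_lt_of_le (pow_pos (by have := cc.B_pos; positivity) _) (cc.wordMap_deriv σ hx).2.1

lemma dist_wordMap_le (σ : List (Fin cc.N)) {C : ℝ}
    (hC : ∀ z ∈ J01, |deriv (cc.wordMap σ) z| ≤ C)
    {x y : ℝ} (hx : x ∈ J01) (hy : y ∈ J01) :
    dist (cc.wordMap σ x) (cc.wordMap σ y) ≤ C * dist x y := by
  have := (convex_Icc (0:ℝ) 1).norm_image_sub_le_of_norm_hasDerivWithin_le
    (fun z hz => (cc.wordMap_deriv σ hz).1.hasDerivWithinAt)
    (fun z hz => by simpa [Real.norm_eq_abs] using hC z hz) hy hx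
  simpa [dist_eq_norm] using this

lemma dist_phi_le (j : Fin cc.N) {u v : ℝ} (hu : u ∈ J01) (hv : v ∈ J01) :
    dist (cc.φ j u) (cc.φ j v) ≤ (1/cc.b) * dist u v := by
  have := (convex_Icc (0:ℝ) 1).norm_image_sub_le_of_norm_hasDerivWithin_le
    (fun z hz => ((cc.hφdiff j z hz).hasDerivAt).hasDerivWithinAt)
    (fun z hz => by simpa [Real.norm_eq_abs] using (cc.deriv_phi_bounds j hz).2) hv hu
  simpa [dist_eq_norm] using this

lemma abs_deriv_le_φnorm (σ : List (Fin cc.N)) {x : ℝ} (hx : x ∈ J01) :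
    |deriv (cc.wordMap σ) x| ≤ cc.φnorm σ :=
  le_csSup ⟨(1/cc.b) ^ σ.length, by rintro v ⟨z, hz, rfl⟩; exact (cc.wordMap_deriv σ hz).2.2⟩
    ⟨x, hx, rfl⟩

lemma φnorm_le (σ : List (Fin cc.N)) {C : ℝ}
    (hC : ∀ z ∈ J01, |deriv (cc.wordMap σ) z| ≤ C) : cc.φnorm σ ≤ C := by
  apply csSup_le
  · exact ⟨_, ⟨0, by norm_num, rfl⟩⟩
  · rintro v ⟨z, hz, rfl⟩; exact hC z hz

lemma φnorm_pos (σ : List (Fin cc.N)) : 0 < cc.φnorm σ :=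
  lt_of_lt_of_le (cc.deriv_wordMap_pos σ (show (0:ℝ) ∈ Set.Icc (0:ℝ) 1 by norm_num))
    (cc.abs_deriv_le_φnorm σ (show (0:ℝ) ∈ Set.Icc (0:ℝ) 1 by norm_num))

lemma φnorm_le_pow (σ : List (Fin cc.N)) : cc.φnorm σ ≤ (1/cc.b) ^ σ.length :=
  cc.φnorm_le σ (fun z hz => (cc.wordMap_deriv σ hz).2.2)

lemma one_div_b_lt_one : 1/cc.b < 1 := by
  rw [div_lt_one cc.b_pos]; exact cc.hb1

lemma φnorm_le_one (σ : List (Fin cc.N)) : cc.φnorm σ ≤ 1 :=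
  (cc.φnorm_le_pow σ).trans (pow_le_one₀ (by have := cc.b_pos; positivity) cc.one_div_b_lt_one.le)

lemma dist_wordMap_le_φnorm (σ : List (Fin cc.N)) {x y : ℝ} (hx : x ∈ J01) (hy : y ∈ J01) :
    dist (cc.wordMap σ x) (cc.wordMap σ y) ≤ cc.φnorm σ * dist x y :=
  cc.dist_wordMap_le σ (fun z hz => cc.abs_deriv_le_φnorm σ hz) hx hy

lemma Jc_nil : cc.Jc [] = J01 := by simp [Jc, wordMap_nil]

lemma Jc_subset (σ : List (Fin cc.N)) : cc.Jc σ ⊆ J01 := by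
  rintro x ⟨y, hy, rfl⟩; exact cc.wordMap_mem σ hy

lemma Jc_nonempty (σ : List (Fin cc.N)) : (cc.Jc σ).Nonempty :=
  ⟨_, ⟨0, by norm_num, rfl⟩⟩

lemma wordMap_continuousOn (σ : List (Fin cc.N)) : ContinuousOn (cc.wordMap σ) J01 :=
  fun x hx => ((cc.wordMap_deriv σ hx).1.differentiableAt.continuousAt).continuousWithinAt

lemma Jc_isCompact (σ : List (Fin cc.N)) : IsCompact (cc.Jc σ) :=
  isCompact_Icc.image_of_continuousOn (cc.wordMap_continuousOn σ)

lemma Jc_measurableSet (σ : List (Fin cc.N)) : MeasurableSet (cc.Jc σ) :=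
  (cc.Jc_isCompact σ).isClosed.measurableSet

lemma Jc_append (σ τ : List (Fin cc.N)) : cc.Jc (σ ++ τ) = cc.wordMap σ '' cc.Jc τ := by
  rw [Jc, Jc, wordMap_append, Set.image_comp]

lemma Jc_prefix_subset {σ τ : List (Fin cc.N)} (hp : σ <+: τ) : cc.Jc τ ⊆ cc.Jc σ := by
  obtain ⟨t, rfl⟩ := hp
  rw [Jc_append]
  exact Set.image_mono (cc.Jc_subset t)

lemma diamJ_nonneg (σ : List (Fin cc.N)) : 0 ≤ cc.diamJ σ := Metric.diam_nonneg

lemma diamJ_append_le (σ τ : List (Fin cc.N)) :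
    cc.diamJ (σ ++ τ) ≤ cc.φnorm σ * cc.diamJ τ := by
  rw [diamJ, Jc_append]
  apply Metric.diam_le_of_forall_dist_le (mul_nonneg (cc.φnorm_pos σ).le Metric.diam_nonneg)
  rintro x ⟨u, hu, rfl⟩ y ⟨v, hv, rfl⟩
  calc dist (cc.wordMap σ u) (cc.wordMap σ v) ≤ cc.φnorm σ * dist u v :=
        cc.dist_wordMap_le_φnorm σ (cc.Jc_subset τ hu) (cc.Jc_subset τ hv)
  _ ≤ cc.φnorm σ * cc.diamJ τ := by
        apply mul_le_mul_of_nonneg_left _ (cc.φnorm_pos σ).le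
        exact Metric.dist_le_diam_of_mem (cc.Jc_isCompact τ).isBounded hu hv

lemma diamJ_le_φnorm (σ : List (Fin cc.N)) : cc.diamJ σ ≤ cc.φnorm σ := by
  have h := cc.diamJ_append_le σ []
  rw [List.append_nil] at h
  have h2 : cc.diamJ [] = 1 := by
    rw [diamJ, Jc_nil, Real.diam_Icc zero_le_one]; norm_num
  rw [h2, mul_one] at h
  exact h

lemma diamJ_le_pow (σ : List (Fin cc.N)) : cc.diamJ σ ≤ (1/cc.b) ^ σ.length :=
  (cc.diamJ_le_φnorm σ).trans (cc.φnorm_le_pow σ)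

lemma phi_injOn (j : Fin cc.N) : Set.InjOn (cc.φ j) J01 := fun u hu v hv he => by
  have h := congrArg cc.f he
  rwa [cc.hφ_rinv j u hu, cc.hφ_rinv j v hv] at h

lemma wordMap_injOn (σ : List (Fin cc.N)) : Set.InjOn (cc.wordMap σ) J01 := by
  induction σ with
  | nil => exact Set.injOn_id _
  | cons j ρ ih =>
    intro u hu v hv he
    exact ih hu hv (cc.phi_injOn j (cc.wordMap_mem ρ hu) (cc.wordMap_mem ρ hv) he)

lemma q_pos : 0 < (1/cc.b) ^ cc.γ :=
  Real.rpow_pos_of_pos (by have := cc.b_pos; positivity) _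

lemma q_lt_one : (1/cc.b) ^ cc.γ < 1 :=
  Real.rpow_lt_one (by have := cc.b_pos; positivity) cc.one_div_b_lt_one cc.hγ.1

lemma pow_rpow_aux {a : ℝ} (ha : 0 ≤ a) (n : ℕ) (g : ℝ) : (a ^ n) ^ g = (a ^ g) ^ n := by
  rw [← Real.rpow_natCast a n, ← Real.rpow_mul ha, mul_comm, Real.rpow_mul ha,
    Real.rpow_natCast]

lemma deriv_wordMap_cons (j : Fin cc.N) (ρ : List (Fin cc.N)) {x : ℝ} (hx : x ∈ J01) :
    deriv (cc.wordMap (j :: ρ)) x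
      = deriv (cc.φ j) (cc.wordMap ρ x) * deriv (cc.wordMap ρ) x :=
  (HasDerivAt.comp x ((cc.hφdiff j _ (cc.wordMap_mem ρ hx)).hasDerivAt)
    (cc.wordMap_deriv ρ hx).1).deriv

lemma deriv_distortion (σ : List (Fin cc.N)) : ∀ {x : ℝ}, x ∈ J01 → ∀ {y : ℝ}, y ∈ J01 →
    |deriv (cc.wordMap σ) x| ≤
      Real.exp (cc.c * ∑ m ∈ Finset.range σ.length, ((1/cc.b) ^ cc.γ) ^ (m+1)) *
        |deriv (cc.wordMap σ) y| := by
  induction σ with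
  | nil =>
    intro x _ y _
    show |deriv id x| ≤ _ * |deriv id y|
    simp
  | cons j ρ ih =>
    intro x hx y hy
    have hu : cc.wordMap ρ x ∈ J01 := cc.wordMap_mem ρ hx
    have hv : cc.wordMap ρ y ∈ J01 := cc.wordMap_mem ρ hy
    set u := cc.wordMap ρ x with hudef
    set v := cc.wordMap ρ y with hvdef
    set q : ℝ := (1/cc.b) ^ cc.γ with hqdef
    have hq0 : 0 < q := cc.q_pos
    have hb0 : (0:ℝ) < 1/cc.b := by have := cc.b_pos; positivity
    -- distance bound on inner maps
    have hδ : dist u v ≤ (1/cc.b) ^ ρ.length := by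
      have h1 := cc.dist_wordMap_le ρ (fun z hz => (cc.wordMap_deriv ρ hz).2.2) hx hy
      have h2 : dist x y ≤ 1 := by
        rw [Real.dist_eq]
        rw [abs_le]
        obtain ⟨hx1, hx2⟩ := hx
        obtain ⟨hy1, hy2⟩ := hy
        constructor <;> linarith
      calc dist u v ≤ (1/cc.b) ^ ρ.length * dist x y := h1
      _ ≤ (1/cc.b) ^ ρ.length * 1 := by
          apply mul_le_mul_of_nonneg_left h2 (by positivity)
      _ = (1/cc.b) ^ ρ.length := mul_one _
    have hjx := cc.hφ_maps j u hu
    have hjy := cc.hφ_maps j v hv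
    set X := |deriv cc.f (cc.φ j u)| with hXdef
    set Y := |deriv cc.f (cc.φ j v)| with hYdef
    have hbX : cc.b ≤ X := cc.deriv_f_lb hjx
    have hbY : cc.b ≤ Y := cc.deriv_f_lb hjy
    have hXpos : 0 < X := lt_of_lt_of_le cc.b_pos hbX
    have hYpos : 0 < Y := lt_of_lt_of_le cc.b_pos hbY
    have hX1 : 1 ≤ X := le_trans cc.hb1.le hbX
    -- Hölder step
    have h3 : |cc.φ j v - cc.φ j u| ≤ (1/cc.b) ^ (ρ.length + 1) := by
      have hd := cc.dist_phi_le j hv hu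
      rw [Real.dist_eq] at hd
      calc |cc.φ j v - cc.φ j u| ≤ (1/cc.b) * dist v u := hd
      _ ≤ (1/cc.b) * (1/cc.b) ^ ρ.length := by
          apply mul_le_mul_of_nonneg_left _ hb0.le
          rw [dist_comm]; exact hδ
      _ = (1/cc.b) ^ (ρ.length + 1) := by rw [pow_succ, mul_comm]
    have h4 : |cc.φ j v - cc.φ j u| ^ cc.γ ≤ q ^ (ρ.length + 1) := by
      rw [hqdef, ← pow_rpow_aux hb0.le]
      exact Real.rpow_le_rpow (abs_nonneg _) h3 cc.hγ.1.le
    have h5 : Y - X ≤ cc.c * q ^ (ρ.length + 1) := by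
      have ha : |Y - X| ≤ |deriv cc.f (cc.φ j v) - deriv cc.f (cc.φ j u)| :=
        abs_abs_sub_abs_le_abs_sub _ _
      have hb' := cc.hHolder j _ hjy _ hjx
      have hc' : cc.c * |cc.φ j v - cc.φ j u| ^ cc.γ ≤ cc.c * q ^ (ρ.length + 1) :=
        mul_le_mul_of_nonneg_left h4 cc.hc.le
      have := (le_abs_self (Y - X)).trans (ha.trans (hb'.trans hc'))
      linarith
    -- ratio bound for the φ-factor
    have hu1 : |deriv (cc.φ j) u| = 1 / X :=
      eq_one_div_of_mul_eq_one_left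
        (by rw [mul_comm, ← abs_mul, cc.phi_chain j hu, abs_one])
    have hv1 : |deriv (cc.φ j) v| = 1 / Y :=
      eq_one_div_of_mul_eq_one_left
        (by rw [mul_comm, ← abs_mul, cc.phi_chain j hv, abs_one])
    have hkey : |deriv (cc.φ j) u| ≤
        Real.exp (cc.c * q ^ (ρ.length + 1)) * |deriv (cc.φ j) v| := by
      rw [hu1, hv1, mul_one_div, div_le_div_iff₀ hXpos hYpos, one_mul]
      have hcq : 0 ≤ cc.c * q ^ (ρ.length + 1) := mul_nonneg cc.hc.le (pow_nonneg hq0.le _)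
      have he : 1 + cc.c * q ^ (ρ.length + 1) ≤ Real.exp (cc.c * q ^ (ρ.length + 1)) := by
        have := Real.add_one_le_exp (cc.c * q ^ (ρ.length + 1))
        linarith
      have h6 : Y ≤ (1 + cc.c * q ^ (ρ.length + 1)) * X := by nlinarith
      calc Y ≤ (1 + cc.c * q ^ (ρ.length + 1)) * X := h6
      _ ≤ Real.exp (cc.c * q ^ (ρ.length + 1)) * X :=
          mul_le_mul_of_nonneg_right he hXpos.le
    -- combine
    have hcx := cc.deriv_wordMap_cons j ρ hx
    have hcy := cc.deriv_wordMap_cons j ρ hy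
    rw [hcx, hcy, abs_mul, abs_mul, List.length_cons, Finset.sum_range_succ, mul_add,
      Real.exp_add]
    have ihxy := ih hx hy
    calc |deriv (cc.φ j) u| * |deriv (cc.wordMap ρ) x|
        ≤ (Real.exp (cc.c * q ^ (ρ.length + 1)) * |deriv (cc.φ j) v|) *
          (Real.exp (cc.c * ∑ m ∈ Finset.range ρ.length, q ^ (m+1)) *
            |deriv (cc.wordMap ρ) y|) :=
        mul_le_mul hkey ihxy (abs_nonneg _) (by positivity)
    _ = Real.exp (cc.c * ∑ m ∈ Finset.range ρ.length, q ^ (m+1)) *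
          Real.exp (cc.c * q ^ (ρ.length + 1)) *
          (|deriv (cc.φ j) v| * |deriv (cc.wordMap ρ) y|) := by ring

lemma distortion_sum_le (k : ℕ) :
    cc.c * ∑ m ∈ Finset.range k, ((1/cc.b) ^ cc.γ) ^ (m+1) ≤ cc.c / (cc.b ^ cc.γ - 1) := by
  set q : ℝ := (1/cc.b) ^ cc.γ with hqdef
  have hq0 : 0 < q := cc.q_pos
  have hq1 : q < 1 := cc.q_lt_one
  have hp1 : 1 < cc.b ^ cc.γ := cc.one_lt_b_rpow
  have hqp : q = (cc.b ^ cc.γ)⁻¹ := by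
    rw [hqdef, one_div, Real.inv_rpow cc.b_pos.le]
  have hs : ∑ m ∈ Finset.range k, q ^ (m+1) ≤ q / (1-q) := by
    have h1 : ∑ m ∈ Finset.range k, q ^ (m+1) = q * ∑ m ∈ Finset.range k, q ^ m := by
      rw [Finset.mul_sum]
      apply Finset.sum_congr rfl
      intro m _
      rw [pow_succ, mul_comm]
    rw [h1]
    have hgeom : ∑ m ∈ Finset.range k, q ^ m ≤ 1/(1-q) := by
      rw [geom_sum_eq (ne_of_lt hq1)]
      have hrw : (q ^ k - 1)/(q - 1) = (1 - q ^ k)/(1 - q) := by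
        rw [← neg_sub 1 (q^k), ← neg_sub 1 q, neg_div_neg_eq]
      rw [hrw, div_le_div_iff₀ (by linarith) (by linarith)]
      have : 0 < q ^ k := pow_pos hq0 k
      nlinarith
    calc q * ∑ m ∈ Finset.range k, q ^ m ≤ q * (1/(1-q)) :=
        mul_le_mul_of_nonneg_left hgeom hq0.le
    _ = q / (1-q) := by rw [mul_one_div]
  have heq : q / (1-q) = 1 / (cc.b ^ cc.γ - 1) := by
    rw [hqp]
    have hbne : cc.b ^ cc.γ ≠ 0 := by positivity
    field_simp
  calc cc.c * ∑ m ∈ Finset.range k, q ^ (m+1) ≤ cc.c * (q/(1-q)) :=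
      mul_le_mul_of_nonneg_left hs cc.hc.le
  _ = cc.c * (1/(cc.b ^ cc.γ - 1)) := by rw [heq]
  _ = cc.c / (cc.b ^ cc.γ - 1) := by rw [mul_one_div]

lemma deriv_distortion_xi (σ : List (Fin cc.N)) {x y : ℝ} (hx : x ∈ J01) (hy : y ∈ J01) :
    |deriv (cc.wordMap σ) x| ≤ cc.xi * |deriv (cc.wordMap σ) y| := by
  refine (cc.deriv_distortion σ hx hy).trans ?_
  apply mul_le_mul_of_nonneg_right _ (abs_nonneg _)
  exact Real.exp_le_exp.2 (cc.distortion_sum_le σ.length)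

lemma φnorm_le_xi_mul {σ : List (Fin cc.N)} {y : ℝ} (hy : y ∈ J01) :
    cc.φnorm σ ≤ cc.xi * |deriv (cc.wordMap σ) y| :=
  cc.φnorm_le σ (fun _ hz => cc.deriv_distortion_xi σ hz hy)

lemma φnorm_le_xi_mul_diamJ (σ : List (Fin cc.N)) : cc.φnorm σ ≤ cc.xi * cc.diamJ σ := by
  obtain ⟨c₀, hc₀, heq⟩ := exists_hasDerivAt_eq_slope (cc.wordMap σ) (deriv (cc.wordMap σ))
    zero_lt_one (cc.wordMap_continuousOn σ)
    (fun z hz => (cc.wordMap_deriv σ (Set.mem_Icc_of_Ioo hz)).1)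
  have h1 : cc.φnorm σ ≤ cc.xi * |deriv (cc.wordMap σ) c₀| :=
    cc.φnorm_le_xi_mul (Set.mem_Icc_of_Ioo hc₀)
  have h2 : |deriv (cc.wordMap σ) c₀| = |cc.wordMap σ 1 - cc.wordMap σ 0| := by
    rw [heq]; norm_num
  have h3 : |cc.wordMap σ 1 - cc.wordMap σ 0| ≤ cc.diamJ σ := by
    rw [← Real.dist_eq]
    exact Metric.dist_le_diam_of_mem (cc.Jc_isCompact σ).isBounded
      ⟨1, by norm_num, rfl⟩ ⟨0, by norm_num, rfl⟩
  refine h1.trans ?_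
  apply mul_le_mul_of_nonneg_left _ cc.xi_pos.le
  rw [h2] at *
  exact h3

lemma diamJ_pos (σ : List (Fin cc.N)) : 0 < cc.diamJ σ := by
  have h1 := cc.φnorm_le_xi_mul_diamJ σ
  have h2 := cc.φnorm_pos σ
  have h3 := cc.xi_pos
  nlinarith [cc.diamJ_nonneg σ]

lemma gibbs_append {h : ℝ} (hh0 : 0 < h) {μ : Measure ℝ} (hμ : cc.IsGibbsLike μ h)
    {σ τ : List (Fin cc.N)} (hσ : σ ≠ []) (hτ : τ ≠ []) :
    (μ (cc.Jc (σ ++ τ))).toReal ≤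
      ((cc.eta h)^3 * cc.xi ^ h) * ((μ (cc.Jc σ)).toReal * (μ (cc.Jc τ)).toReal) := by
  obtain ⟨hP, hE0, hG⟩ := hμ
  have hστ : σ ++ τ ≠ [] := by simp [hσ]
  have g1 := (hG _ hστ).2
  have g2 := (hG σ hσ).1
  have g3 := (hG τ hτ).1
  have heta := cc.eta_pos h
  have hxir : (0:ℝ) ≤ cc.xi ^ h := Real.rpow_nonneg cc.xi_pos.le _
  have d3 : cc.diamJ τ ^ h ≤ cc.eta h * (μ (cc.Jc τ)).toReal := by
    have h1 := mul_le_mul_of_nonneg_left g3 heta.le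
    rwa [← mul_assoc, mul_inv_cancel₀ heta.ne', one_mul] at h1
  have d3' : cc.diamJ σ ^ h ≤ cc.eta h * (μ (cc.Jc σ)).toReal := by
    have h1 := mul_le_mul_of_nonneg_left g2 heta.le
    rwa [← mul_assoc, mul_inv_cancel₀ heta.ne', one_mul] at h1
  have d1 : cc.diamJ (σ ++ τ) ^ h ≤ cc.φnorm σ ^ h * cc.diamJ τ ^ h := by
    have := Real.rpow_le_rpow (cc.diamJ_nonneg _) (cc.diamJ_append_le σ τ) hh0.le
    rwa [Real.mul_rpow (cc.φnorm_pos σ).le (cc.diamJ_nonneg τ)] at this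
  have d4 : cc.φnorm σ ^ h ≤ cc.xi ^ h * (cc.eta h * (μ (cc.Jc σ)).toReal) := by
    have h1 : cc.φnorm σ ^ h ≤ (cc.xi * cc.diamJ σ) ^ h :=
      Real.rpow_le_rpow (cc.φnorm_pos σ).le (cc.φnorm_le_xi_mul_diamJ σ) hh0.le
    rw [Real.mul_rpow cc.xi_pos.le (cc.diamJ_nonneg σ)] at h1
    exact h1.trans (mul_le_mul_of_nonneg_left d3' hxir)
  have hd4' : (0:ℝ) ≤ cc.diamJ τ ^ h := Real.rpow_nonneg (cc.diamJ_nonneg τ) _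
  have hmσ : (0:ℝ) ≤ (μ (cc.Jc σ)).toReal := ENNReal.toReal_nonneg
  calc (μ (cc.Jc (σ ++ τ))).toReal ≤ cc.eta h * cc.diamJ (σ ++ τ) ^ h := g1
  _ ≤ cc.eta h * (cc.φnorm σ ^ h * cc.diamJ τ ^ h) := mul_le_mul_of_nonneg_left d1 heta.le
  _ ≤ cc.eta h * ((cc.xi ^ h * (cc.eta h * (μ (cc.Jc σ)).toReal)) *
        (cc.eta h * (μ (cc.Jc τ)).toReal)) := by
      apply mul_le_mul_of_nonneg_left _ heta.le
      exact mul_le_mul d4 d3 hd4' (by positivity)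
  _ = ((cc.eta h)^3 * cc.xi ^ h) * ((μ (cc.Jc σ)).toReal * (μ (cc.Jc τ)).toReal) := by ring

lemma Jc_disjoint_of_not_prefix : ∀ (σ τ : List (Fin cc.N)), ¬ σ <+: τ → ¬ τ <+: σ →
    Disjoint (cc.Jc σ) (cc.Jc τ) := by
  intro σ
  induction σ with
  | nil => intro τ h1 _; exact absurd List.nil_prefix h1
  | cons a σ' ih =>
    intro τ h1 h2
    cases τ with
    | nil => exact absurd List.nil_prefix h2
    | cons b' τ' =>
      by_cases hab : a = b'
      · subst hab
        have h1' : ¬ σ' <+: τ' := fun hp => h1 (List.cons_prefix_cons.2 ⟨rfl, hp⟩)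
        have h2' : ¬ τ' <+: σ' := fun hp => h2 (List.cons_prefix_cons.2 ⟨rfl, hp⟩)
        have hd := ih τ' h1' h2'
        rw [Set.disjoint_left]
        rintro x ⟨y, hy, rfl⟩ ⟨z, hz, hzx⟩
        have hu : cc.wordMap σ' y ∈ J01 := cc.wordMap_mem σ' hy
        have hv : cc.wordMap τ' z ∈ J01 := cc.wordMap_mem τ' hz
        have heq : cc.wordMap τ' z = cc.wordMap σ' y := cc.phi_injOn a hv hu hzx
        exact (Set.disjoint_left.1 hd) ⟨y, hy, rfl⟩ ⟨z, hz, heq⟩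
      · apply Set.disjoint_of_subset ?_ ?_ (cc.hJsub_disj a b' hab)
        · rintro x ⟨y, hy, rfl⟩
          exact cc.hφ_maps a _ (cc.wordMap_mem σ' hy)
        · rintro x ⟨y, hy, rfl⟩
          exact cc.hφ_maps b' _ (cc.wordMap_mem τ' hy)

lemma Jc_disjoint_of_ne {σ τ : List (Fin cc.N)} (hlen : σ.length = τ.length) (hne : σ ≠ τ) :
    Disjoint (cc.Jc σ) (cc.Jc τ) :=
  cc.Jc_disjoint_of_not_prefix σ τ (fun hp => hne (hp.eq_of_length hlen))
    (fun hp => hne (hp.eq_of_length hlen.symm).symm)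

lemma take_eq_of_mem_Jc {x : ℝ} {ρ ρ' : List (Fin cc.N)} (hx : x ∈ cc.Jc ρ)
    (hx' : x ∈ cc.Jc ρ') (hle : ρ.length ≤ ρ'.length) : ρ'.take ρ.length = ρ := by
  by_contra hne
  have hxt : x ∈ cc.Jc (ρ'.take ρ.length) := cc.Jc_prefix_subset (List.take_prefix _ _) hx'
  have hlen : (ρ'.take ρ.length).length = ρ.length := by
    rw [List.length_take]; omega
  exact Set.disjoint_left.1 (cc.Jc_disjoint_of_ne hlen hne) hxt hx

lemma mem_E_iff {x : ℝ} : x ∈ cc.E ↔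
    ∀ n : ℕ, 1 ≤ n → ∃ σ : Fin n → Fin cc.N, x ∈ cc.Jc (List.ofFn σ) := by
  simp [E, Set.mem_iInter, Set.mem_iUnion]

lemma E_subset_J01 : cc.E ⊆ J01 := by
  intro x hx
  obtain ⟨σ, hσ⟩ := (cc.mem_E_iff.1 hx) 1 le_rfl
  exact cc.Jc_subset _ hσ

lemma E_inter_Jc_subset (σ : List (Fin cc.N)) (m : ℕ) (hσm : 1 ≤ σ.length + m) :
    cc.E ∩ cc.Jc σ ⊆ ⋃ τ : Fin m → Fin cc.N, cc.Jc (σ ++ List.ofFn τ) := by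
  rintro x ⟨hxE, hxJ⟩
  obtain ⟨ρf, hρ⟩ := cc.mem_E_iff.1 hxE (σ.length + m) hσm
  have hlenρ : (List.ofFn ρf).length = σ.length + m := by simp
  have htake : (List.ofFn ρf).take σ.length = σ :=
    cc.take_eq_of_mem_Jc hxJ hρ (by omega)
  set t : List (Fin cc.N) := (List.ofFn ρf).drop σ.length with htdef
  have hlent : t.length = m := by rw [htdef, List.length_drop]; omega
  have hρeq : List.ofFn ρf = σ ++ t := by
    conv_lhs => rw [← List.take_append_drop σ.length (List.ofFn ρf)]
    rw [htake]
  refine Set.mem_iUnion.2 ⟨fun i => t.get ⟨i.1, by omega⟩, ?_⟩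
  have hofn : List.ofFn (fun i : Fin m => t.get ⟨i.1, by omega⟩) = t := by
    apply List.ext_getElem (by simp [hlent])
    intro i h1 h2
    simp [List.getElem_ofFn]
  rw [hofn, ← hρeq]
  exact hρ

lemma E_subset_biUnion {Γ : Finset (List (Fin cc.N))} (hΓ : cc.IsFMA Γ) :
    cc.E ⊆ ⋃ σ ∈ Γ, cc.Jc σ := by
  intro x hx
  have hxall := cc.mem_E_iff.1 hx
  have hsel : ∀ k : ℕ, ∃ σ : Fin (k+1) → Fin cc.N, x ∈ cc.Jc (List.ofFn σ) :=
    fun k => hxall (k+1) (by omega)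
  choose s hs using hsel
  set ω : ℕ → Fin cc.N := fun i => s i ⟨i, Nat.lt_succ_self i⟩ with hω
  have key : ∀ k : ℕ, (List.ofFn fun i : Fin (k+1) => ω ↑i) = List.ofFn (s k) := by
    intro k
    apply List.ext_getElem (by simp)
    intro i h1 h2
    have hik : i < k + 1 := by simpa using h2
    have hco := cc.take_eq_of_mem_Jc (hs i) (hs k) (by simp; omega)
    have hlofn : (List.ofFn (s i)).length = i + 1 := by simp
    rw [hlofn] at hco
    have hi1 : i < ((List.ofFn (s k)).take (i+1)).length := by
      rw [List.length_take]; simp; omega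
    have h3 : ((List.ofFn (s k)).take (i+1))[i]'hi1 = (List.ofFn (s i))[i]'(by simp) := by
      simp only [hco]
    rw [List.getElem_take] at h3
    simp only [List.getElem_ofFn] at h3 ⊢
    exact h3.symm
  obtain ⟨k, hk1, hkΓ⟩ := hΓ.2.1 ω
  obtain ⟨k', rfl⟩ : ∃ k', k = k' + 1 := ⟨k - 1, by omega⟩
  refine Set.mem_iUnion₂.2 ⟨_, hkΓ, ?_⟩
  rw [key k']
  exact hs k'

lemma Γ_pairwise_disjoint {Γ : Finset (List (Fin cc.N))} (hΓ : cc.IsFMA Γ) :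
    (↑Γ : Set (List (Fin cc.N))).Pairwise (Function.onFun Disjoint fun σ => cc.Jc σ) := by
  intro σ hσ τ hτ hne
  exact cc.Jc_disjoint_of_not_prefix σ τ
    (fun hp => hne (hΓ.2.2 σ hσ τ hτ hp))
    (fun hp => hne ((hΓ.2.2 τ hτ σ hσ hp).symm))

lemma Γ_nonempty {Γ : Finset (List (Fin cc.N))} (hΓ : cc.IsFMA Γ) : Γ.Nonempty := by
  obtain ⟨k, _, hkΓ⟩ := hΓ.2.1 (fun _ => ⟨0, by have := cc.hN; omega⟩)
  exact ⟨_, hkΓ⟩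

lemma ae_mem_J01 {μ : Measure ℝ} (hE0 : μ cc.Eᶜ = 0) : ∀ᵐ x ∂μ, x ∈ J01 := by
  have h1 : ∀ᵐ x ∂μ, x ∈ cc.E := by
    rw [MeasureTheory.ae_iff]
    exact hE0
  filter_upwards [h1] with x hx using cc.E_subset_J01 hx

end CookieCutter

section Helpers

lemma aux_le_of_forall_pos {a c K : ℝ} (hK : 0 ≤ K)
    (h : ∀ δ : ℝ, 0 < δ → a ≤ c + K * δ) : a ≤ c := by
  rcases eq_or_lt_of_le hK with hK0 | hKpos
  · have h1 := h 1 one_pos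
    rw [← hK0, zero_mul, add_zero] at h1
    exact h1
  · apply le_of_forall_pos_le_add
    intro ε hε
    have h2 := h (ε / K) (div_pos hε hKpos)
    rwa [mul_comm, div_mul_cancel₀ _ hKpos.ne'] at h2

lemma aux_rpow_gap {r : ℝ} (hr : 0 ≤ r) {δ : ℝ} (hδ : 0 < δ) :
    ∃ ε : ℝ, 0 < ε ∧ ∀ t ∈ Set.Icc (0:ℝ) 2, (t + ε) ^ r ≤ t ^ r + δ := by
  have hc : ContinuousOn (fun t : ℝ => t ^ r) (Set.Icc 0 3) :=
    (Real.continuous_rpow_const hr).continuousOn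
  have huc := (isCompact_Icc (a := (0:ℝ)) (b := 3)).uniformContinuousOn_of_continuous hc
  rw [Metric.uniformContinuousOn_iff] at huc
  obtain ⟨ε0, hε0, H⟩ := huc δ hδ
  have hm0 : (0:ℝ) < min (ε0/2) 1 := by positivity
  refine ⟨min (ε0/2) 1, hm0, fun t ht => ?_⟩
  obtain ⟨ht0, ht2⟩ := ht
  have hmem1 : t + min (ε0/2) 1 ∈ Set.Icc (0:ℝ) 3 := by
    constructor
    · linarith
    · have : min (ε0/2) 1 ≤ 1 := min_le_right _ _
      linarith
  have hmem2 : t ∈ Set.Icc (0:ℝ) 3 := ⟨ht0, by linarith⟩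
  have hd : dist (t + min (ε0/2) 1) t < ε0 := by
    rw [Real.dist_eq]
    have h2 : min (ε0/2) 1 ≤ ε0/2 := min_le_left _ _
    have h3 : t + min (ε0/2) 1 - t = min (ε0/2) 1 := by ring
    rw [h3, abs_of_pos hm0]
    linarith
  have hH := H _ hmem1 _ hmem2 hd
  rw [Real.dist_eq] at hH
  have hH2 := (abs_lt.1 hH).2
  linarith

/-- clamp to `[0,1]` -/
noncomputable def clampI (a : ℝ) : ℝ := max 0 (min 1 a)

lemma clampI_mem (a : ℝ) : clampI a ∈ Set.Icc (0:ℝ) 1 :=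
  ⟨le_max_left _ _, max_le zero_le_one (min_le_left _ _)⟩

lemma dist_clampI {x a : ℝ} (hx : x ∈ Set.Icc (0:ℝ) 1) : dist x (clampI a) ≤ dist x a := by
  obtain ⟨h0, h1⟩ := hx
  rw [Real.dist_eq, Real.dist_eq]
  unfold clampI
  rcases le_total a 0 with ha | ha
  · rw [min_eq_right (ha.trans zero_le_one), max_eq_left ha, sub_zero,
      abs_of_nonneg h0, abs_of_nonneg (by linarith)]
    linarith
  · rcases le_total 1 a with ha1 | ha1
    · rw [min_eq_left ha1, max_eq_right zero_le_one,
        abs_of_nonpos (by linarith), abs_of_nonpos (by linarith)]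
      linarith
    · rw [min_eq_right ha1, max_eq_right ha]

lemma exists_infDist_eq {x : ℝ} {α : Finset ℝ} (hα : α.Nonempty) :
    ∃ a ∈ α, Metric.infDist x (α : Set ℝ) = dist x a := by
  obtain ⟨a, ha, hmin⟩ := α.exists_min_image (fun a => dist x a) hα
  refine ⟨a, ha, le_antisymm (Metric.infDist_le_dist_of_mem ha) ?_⟩
  by_contra hlt
  push_neg at hlt
  obtain ⟨y, hy, hylt⟩ := (Metric.infDist_lt_iff ⟨a, ha⟩).1 hlt
  exact absurd hylt (not_lt.2 (hmin y hy))

lemma Vnr_nonneg (μ : MeasureTheory.Measure ℝ) (n : ℕ) (r : ℝ) : 0 ≤ Vnr μ n r := by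
  apply Real.sInf_nonneg
  rintro v ⟨α, _, rfl⟩
  exact MeasureTheory.integral_nonneg (fun x => Real.rpow_nonneg Metric.infDist_nonneg r)

lemma Vnr_le (μ : MeasureTheory.Measure ℝ) (r : ℝ) {n : ℕ} (β : Finset ℝ)
    (hne : β.Nonempty) (hcard : β.card ≤ n) :
    Vnr μ n r ≤ ∫ x, Metric.infDist x (β : Set ℝ) ^ r ∂μ := by
  unfold Vnr
  exact csInf_le ⟨0, by
    rintro v ⟨α, _, rfl⟩
    exact MeasureTheory.integral_nonneg (fun x => Real.rpow_nonneg Metric.infDist_nonneg r)⟩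
    ⟨β, ⟨hne, hcard⟩, rfl⟩

lemma Vnr_exists_near (μ : MeasureTheory.Measure ℝ) (n : ℕ) (r : ℝ) (hn : 1 ≤ n)
    {ε : ℝ} (hε : 0 < ε) :
    ∃ α : Finset ℝ, α.Nonempty ∧ α.card ≤ n ∧
      ∫ x, Metric.infDist x (α : Set ℝ) ^ r ∂μ ≤ Vnr μ n r + ε := by
  have hne : ((fun α : Finset ℝ => ∫ x, Metric.infDist x (α : Set ℝ) ^ r ∂μ) ''
      {α : Finset ℝ | α.Nonempty ∧ α.card ≤ n}).Nonempty :=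
    ⟨_, ⟨{0}, ⟨Finset.singleton_nonempty 0, by simpa using hn⟩, rfl⟩⟩
  obtain ⟨v, hv, hlt⟩ := Real.lt_sInf_add_pos hne hε
  obtain ⟨α, ⟨h1, h2⟩, rfl⟩ := hv
  exact ⟨α, h1, h2, hlt.le⟩

lemma integrable_infDist_rpow {μ : MeasureTheory.Measure ℝ}
    [MeasureTheory.IsProbabilityMeasure μ]
    (hsupp : ∀ᵐ x ∂μ, x ∈ Set.Icc (0:ℝ) 1) {S : Set ℝ} {a₀ : ℝ} (ha₀ : a₀ ∈ S)
    {r : ℝ} (hr : 0 ≤ r) (d : ℝ) (hd : 0 ≤ d) :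
    MeasureTheory.Integrable (fun x => (Metric.infDist x S + d) ^ r) μ := by
  have hcont : Continuous (fun x => (Metric.infDist x S + d) ^ r) :=
    (Real.continuous_rpow_const hr).comp
      ((Metric.continuous_infDist_pt S).add continuous_const)
  apply MeasureTheory.Integrable.mono'
    (MeasureTheory.integrable_const ((1 + |a₀| + d) ^ r)) hcont.aestronglyMeasurable
  filter_upwards [hsupp] with x hx
  have hnn : 0 ≤ Metric.infDist x S + d := add_nonneg Metric.infDist_nonneg hd
  rw [Real.norm_eq_abs, abs_of_nonneg (Real.rpow_nonneg hnn r)]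
  apply Real.rpow_le_rpow hnn _ hr
  have h1 : Metric.infDist x S ≤ dist x a₀ := Metric.infDist_le_dist_of_mem ha₀
  have h2 : dist x a₀ ≤ 1 + |a₀| := by
    rw [Real.dist_eq]
    obtain ⟨hx0, hx1⟩ := hx
    have h3 := le_abs_self a₀
    have h4 := neg_abs_le a₀
    rw [abs_le]
    constructor <;> linarith
  linarith

end Helpers

namespace CookieCutter

variable (cc : CookieCutter)

local notation "J01" => Set.Icc (0:ℝ) 1

lemma core_estimate {h : ℝ} (hh0 : 0 < h) {μ : Measure ℝ} (hμ : cc.IsGibbsLike μ h)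
    {r : ℝ} (hr : 0 < r) {σ : List (Fin cc.N)} (hσ : σ ≠ [])
    (α : Finset ℝ) (hαne : α.Nonempty) (hα1 : (α : Set ℝ) ⊆ J01) :
    ∫ x in cc.Jc σ,
        Metric.infDist x ((α.image (cc.wordMap σ) : Finset ℝ) : Set ℝ) ^ r ∂μ ≤
      ((cc.eta h)^3 * cc.xi ^ h) * (μ (cc.Jc σ)).toReal * cc.φnorm σ ^ r *
        (∫ y, Metric.infDist y (α : Set ℝ) ^ r ∂μ) := by
  haveI hP : IsProbabilityMeasure μ := hμ.1
  have hE0 : μ cc.Eᶜ = 0 := hμ.2.1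
  have hae := cc.ae_mem_J01 hE0
  obtain ⟨a₀, ha₀⟩ := hαne
  have ha₀S : a₀ ∈ (α : Set ℝ) := ha₀
  have ha₀01 : a₀ ∈ J01 := hα1 ha₀S
  set C₀ : ℝ := (cc.eta h)^3 * cc.xi ^ h with hC₀
  have hC₀pos : 0 < C₀ :=
    mul_pos (pow_pos (cc.eta_pos h) 3) (Real.rpow_pos_of_pos cc.xi_pos h)
  have hφr : 0 < cc.φnorm σ ^ r := Real.rpow_pos_of_pos (cc.φnorm_pos σ) r
  set K : ℝ := C₀ * (μ (cc.Jc σ)).toReal * cc.φnorm σ ^ r with hK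
  have hK0 : 0 ≤ K := mul_nonneg (mul_nonneg hC₀pos.le ENNReal.toReal_nonneg) hφr.le
  set β : Finset ℝ := α.image (cc.wordMap σ) with hβ
  have hβne : β.Nonempty := Finset.Nonempty.image ⟨a₀, ha₀⟩ _
  have hb₀S : cc.wordMap σ a₀ ∈ (β : Set ℝ) := by
    rw [hβ]
    exact_mod_cast Finset.mem_image_of_mem _ ha₀
  have hgint : Integrable (fun x => Metric.infDist x (β : Set ℝ) ^ r) μ := by
    have h1 := integrable_infDist_rpow hae hb₀S hr.le 0 le_rfl
    simpa using h1
  have hαint : Integrable (fun y => Metric.infDist y (α : Set ℝ) ^ r) μ := by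
    have h1 := integrable_infDist_rpow hae ha₀S hr.le 0 le_rfl
    simpa using h1
  apply aux_le_of_forall_pos hK0
  intro δ hδ
  obtain ⟨ε, hε, hgap⟩ := aux_rpow_gap hr.le hδ
  obtain ⟨m₀, hm₀⟩ := exists_pow_lt_of_lt_one (half_pos hε) cc.one_div_b_lt_one
  set m : ℕ := m₀ + 1 with hm
  have hb01 : (0:ℝ) ≤ 1/cc.b := by have := cc.b_pos; positivity
  set ρm : ℝ := (1/cc.b)^m with hρ
  have hρm : ρm ≤ ε/2 := by
    calc ρm ≤ (1/cc.b)^m₀ :=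
        pow_le_pow_of_le_one hb01 cc.one_div_b_lt_one.le (by omega)
    _ ≤ ε/2 := hm₀.le
  have hρm0 : (0:ℝ) ≤ ρm := by rw [hρ]; positivity
  have hα2int : Integrable (fun y => (Metric.infDist y (α:Set ℝ) + 2*ρm) ^ r) μ :=
    integrable_infDist_rpow hae ha₀S hr.le (2*ρm) (by linarith)
  have hσlen : 1 ≤ σ.length := List.length_pos_iff.2 hσ
  -- refinement cylinders
  have hTsub : ∀ τ : Fin m → Fin cc.N, cc.Jc (σ ++ List.ofFn τ) ⊆ cc.Jc σ :=
    fun τ => cc.Jc_prefix_subset ⟨_, rfl⟩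
  have hTdisj : Set.Pairwise ((Finset.univ : Finset (Fin m → Fin cc.N)) : Set (Fin m → Fin cc.N))
      (Function.onFun Disjoint (fun τ => cc.Jc (σ ++ List.ofFn τ))) := by
    intro τ1 _ τ2 _ hne
    apply cc.Jc_disjoint_of_ne (by simp)
    intro hle
    exact hne (List.ofFn_inj.1 (List.append_cancel_left hle))
  have hT'disj : Set.Pairwise ((Finset.univ : Finset (Fin m → Fin cc.N)) : Set (Fin m → Fin cc.N))
      (Function.onFun Disjoint (fun τ => cc.Jc (List.ofFn τ))) := by
    intro τ1 _ τ2 _ hne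
    apply cc.Jc_disjoint_of_ne (by simp)
    intro hle
    exact hne (List.ofFn_inj.1 hle)
  have hcov : cc.Jc σ =ᵐ[μ] ⋃ τ : Fin m → Fin cc.N, cc.Jc (σ ++ List.ofFn τ) := by
    rw [MeasureTheory.ae_eq_set]
    constructor
    · apply measure_mono_null _ hE0
      rintro x ⟨hx1, hx2⟩
      intro hxE
      exact hx2 (cc.E_inter_Jc_subset σ m (by omega) ⟨hxE, hx1⟩)
    · have he : (⋃ τ : Fin m → Fin cc.N, cc.Jc (σ ++ List.ofFn τ)) \ cc.Jc σ = ∅ :=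
        Set.diff_eq_empty.2 (Set.iUnion_subset hTsub)
      rw [he]
      exact measure_empty
  have hsplit : ∫ x in cc.Jc σ, Metric.infDist x (β : Set ℝ) ^ r ∂μ =
      ∑ τ : Fin m → Fin cc.N, ∫ x in cc.Jc (σ ++ List.ofFn τ),
        Metric.infDist x (β : Set ℝ) ^ r ∂μ := by
    rw [MeasureTheory.setIntegral_congr_set hcov]
    have huniv : (⋃ τ : Fin m → Fin cc.N, cc.Jc (σ ++ List.ofFn τ)) =
        ⋃ τ ∈ (Finset.univ : Finset (Fin m → Fin cc.N)), cc.Jc (σ ++ List.ofFn τ) := by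
      simp
    rw [huniv]
    exact MeasureTheory.integral_biUnion_finset Finset.univ
      (fun τ _ => cc.Jc_measurableSet _) hTdisj (fun τ _ => hgint.integrableOn)
  -- reference points
  have hz01 : ∀ τ : Fin m → Fin cc.N, cc.wordMap (List.ofFn τ) 0 ∈ J01 :=
    fun τ => cc.wordMap_mem _ (by norm_num)
  have hzmem : ∀ τ : Fin m → Fin cc.N, cc.wordMap (List.ofFn τ) 0 ∈ cc.Jc (List.ofFn τ) :=
    fun τ => ⟨0, by norm_num, rfl⟩
  set c' : (Fin m → Fin cc.N) → ℝ :=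
    fun τ => Metric.infDist (cc.wordMap (List.ofFn τ) 0) (α : Set ℝ) + ρm with hc'
  have hc'0 : ∀ τ, 0 ≤ c' τ := fun τ => add_nonneg Metric.infDist_nonneg hρm0
  have hdiamτ : ∀ τ : Fin m → Fin cc.N, cc.diamJ (List.ofFn τ) ≤ ρm := by
    intro τ
    have h1 := cc.diamJ_le_pow (List.ofFn τ)
    rwa [List.length_ofFn] at h1
  -- pointwise bound on each refined cylinder
  have hpt : ∀ τ : Fin m → Fin cc.N, ∀ x ∈ cc.Jc (σ ++ List.ofFn τ),
      Metric.infDist x (β : Set ℝ) ^ r ≤ cc.φnorm σ ^ r * (c' τ) ^ r := by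
    intro τ x hx
    rw [cc.Jc_append] at hx
    obtain ⟨y, hy, rfl⟩ := hx
    have hy01 : y ∈ J01 := cc.Jc_subset _ hy
    obtain ⟨a, haα, hya⟩ := exists_infDist_eq (x := y) ⟨a₀, ha₀⟩
    have ha01 : a ∈ J01 := hα1 haα
    have h1 : Metric.infDist (cc.wordMap σ y) (β : Set ℝ) ≤
        dist (cc.wordMap σ y) (cc.wordMap σ a) := by
      apply Metric.infDist_le_dist_of_mem
      rw [hβ]
      exact_mod_cast Finset.mem_image_of_mem _ haα
    have h2 : dist (cc.wordMap σ y) (cc.wordMap σ a) ≤ cc.φnorm σ * dist y a :=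
      cc.dist_wordMap_le_φnorm σ hy01 ha01
    have h4 : Metric.infDist y (α:Set ℝ) ≤
        Metric.infDist (cc.wordMap (List.ofFn τ) 0) (α:Set ℝ) + dist y (cc.wordMap (List.ofFn τ) 0) :=
      Metric.infDist_le_infDist_add_dist
    have h5 : dist y (cc.wordMap (List.ofFn τ) 0) ≤ ρm := by
      have hd := Metric.dist_le_diam_of_mem (cc.Jc_isCompact (List.ofFn τ)).isBounded hy (hzmem τ)
      exact hd.trans (hdiamτ τ)
    have h6 : Metric.infDist (cc.wordMap σ y) (β:Set ℝ) ≤ cc.φnorm σ * c' τ := by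
      have h7 : dist y a ≤ c' τ := by
        have hcc : c' τ = Metric.infDist (cc.wordMap (List.ofFn τ) 0) (α : Set ℝ) + ρm := rfl
        rw [← hya, hcc]
        linarith
      calc Metric.infDist (cc.wordMap σ y) (β:Set ℝ) ≤ cc.φnorm σ * dist y a := h1.trans h2
      _ ≤ cc.φnorm σ * c' τ := mul_le_mul_of_nonneg_left h7 (cc.φnorm_pos σ).le
    calc Metric.infDist (cc.wordMap σ y) (β:Set ℝ) ^ r ≤ (cc.φnorm σ * c' τ) ^ r :=
        Real.rpow_le_rpow Metric.infDist_nonneg h6 hr.le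
    _ = cc.φnorm σ ^ r * (c' τ) ^ r := Real.mul_rpow (cc.φnorm_pos σ).le (hc'0 τ)
  have hint_τ : ∀ τ : Fin m → Fin cc.N, ∫ x in cc.Jc (σ ++ List.ofFn τ),
      Metric.infDist x (β : Set ℝ) ^ r ∂μ ≤
      (μ (cc.Jc (σ ++ List.ofFn τ))).toReal * (cc.φnorm σ ^ r * (c' τ)^r) := by
    intro τ
    have h1 : ∫ x in cc.Jc (σ ++ List.ofFn τ), Metric.infDist x (β : Set ℝ) ^ r ∂μ ≤
        ∫ _x in cc.Jc (σ ++ List.ofFn τ), (cc.φnorm σ ^ r * (c' τ)^r) ∂μ :=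
      MeasureTheory.setIntegral_mono_on hgint.integrableOn
        (MeasureTheory.integrableOn_const (measure_lt_top μ _).ne)
        (cc.Jc_measurableSet _) (hpt τ)
    rwa [MeasureTheory.setIntegral_const, smul_eq_mul] at h1
  have hgibbs : ∀ τ : Fin m → Fin cc.N, (μ (cc.Jc (σ ++ List.ofFn τ))).toReal ≤
      C₀ * (μ (cc.Jc σ)).toReal * (μ (cc.Jc (List.ofFn τ))).toReal := by
    intro τ
    have hτne : List.ofFn τ ≠ [] := by
      intro hnil
      have := congrArg List.length hnil
      simp [hm] at this
    have h1 := cc.gibbs_append hh0 hμ hσ hτne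
    rw [mul_assoc]
    exact h1
  have hstep4 : ∀ τ : Fin m → Fin cc.N,
      (μ (cc.Jc (List.ofFn τ))).toReal * (c' τ)^r ≤
        ∫ y in cc.Jc (List.ofFn τ), (Metric.infDist y (α:Set ℝ) + 2*ρm)^r ∂μ := by
    intro τ
    have hpt2 : ∀ y ∈ cc.Jc (List.ofFn τ),
        (c' τ)^r ≤ (Metric.infDist y (α:Set ℝ) + 2*ρm)^r := by
      intro y hy
      apply Real.rpow_le_rpow (hc'0 τ) _ hr.le
      have h4 : Metric.infDist (cc.wordMap (List.ofFn τ) 0) (α:Set ℝ) ≤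
          Metric.infDist y (α:Set ℝ) + dist (cc.wordMap (List.ofFn τ) 0) y :=
        Metric.infDist_le_infDist_add_dist
      have h5 : dist (cc.wordMap (List.ofFn τ) 0) y ≤ ρm := by
        have hd := Metric.dist_le_diam_of_mem (cc.Jc_isCompact (List.ofFn τ)).isBounded
          (hzmem τ) hy
        exact hd.trans (hdiamτ τ)
      have hcc : c' τ = Metric.infDist (cc.wordMap (List.ofFn τ) 0) (α : Set ℝ) + ρm := rfl
      rw [hcc]
      linarith
    have h1 : ∫ _y in cc.Jc (List.ofFn τ), (c' τ)^r ∂μ ≤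
        ∫ y in cc.Jc (List.ofFn τ), (Metric.infDist y (α:Set ℝ) + 2*ρm)^r ∂μ :=
      MeasureTheory.setIntegral_mono_on
        (MeasureTheory.integrableOn_const (measure_lt_top μ _).ne)
        (hα2int.integrableOn) (cc.Jc_measurableSet _) hpt2
    rwa [MeasureTheory.setIntegral_const, smul_eq_mul] at h1
  have hsum4 : ∑ τ : Fin m → Fin cc.N, (μ (cc.Jc (List.ofFn τ))).toReal * (c' τ)^r ≤
      ∫ y, (Metric.infDist y (α:Set ℝ) + 2*ρm)^r ∂μ := by
    calc ∑ τ : Fin m → Fin cc.N, (μ (cc.Jc (List.ofFn τ))).toReal * (c' τ)^r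
        ≤ ∑ τ : Fin m → Fin cc.N,
            ∫ y in cc.Jc (List.ofFn τ), (Metric.infDist y (α:Set ℝ) + 2*ρm)^r ∂μ :=
          Finset.sum_le_sum (fun τ _ => hstep4 τ)
    _ = ∫ y in ⋃ τ ∈ (Finset.univ : Finset (Fin m → Fin cc.N)), cc.Jc (List.ofFn τ),
          (Metric.infDist y (α:Set ℝ) + 2*ρm)^r ∂μ :=
        (MeasureTheory.integral_biUnion_finset Finset.univ
          (fun τ _ => cc.Jc_measurableSet _) hT'disj (fun τ _ => hα2int.integrableOn)).symm
    _ ≤ ∫ y, (Metric.infDist y (α:Set ℝ) + 2*ρm)^r ∂μ :=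
        MeasureTheory.setIntegral_le_integral hα2int
          (Filter.Eventually.of_forall (fun y =>
            Real.rpow_nonneg (add_nonneg Metric.infDist_nonneg (by linarith)) r))
  have hgap2 : ∫ y, (Metric.infDist y (α:Set ℝ) + 2*ρm)^r ∂μ ≤
      (∫ y, Metric.infDist y (α:Set ℝ)^r ∂μ) + δ := by
    have hptw : ∀ᵐ y ∂μ, (Metric.infDist y (α:Set ℝ) + 2*ρm)^r ≤
        Metric.infDist y (α:Set ℝ)^r + δ := by
      filter_upwards [hae] with y hy
      have hid2 : Metric.infDist y (α:Set ℝ) ∈ Set.Icc (0:ℝ) 2 := by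
        constructor
        · exact Metric.infDist_nonneg
        · have h1 : Metric.infDist y (α:Set ℝ) ≤ dist y a₀ :=
            Metric.infDist_le_dist_of_mem ha₀S
          have h2 : dist y a₀ ≤ 2 := by
            rw [Real.dist_eq]
            obtain ⟨hy0, hy1⟩ := hy
            obtain ⟨ha0, ha1⟩ := ha₀01
            rw [abs_le]
            constructor <;> linarith
          linarith
      calc (Metric.infDist y (α:Set ℝ) + 2*ρm)^r ≤ (Metric.infDist y (α:Set ℝ) + ε)^r :=
          Real.rpow_le_rpow (add_nonneg Metric.infDist_nonneg (by linarith))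
            (by linarith) hr.le
      _ ≤ Metric.infDist y (α:Set ℝ)^r + δ := hgap _ hid2
    calc ∫ y, (Metric.infDist y (α:Set ℝ) + 2*ρm)^r ∂μ
        ≤ ∫ y, (Metric.infDist y (α:Set ℝ)^r + δ) ∂μ :=
        MeasureTheory.integral_mono_ae hα2int (hαint.add (MeasureTheory.integrable_const δ)) hptw
    _ = (∫ y, Metric.infDist y (α:Set ℝ)^r ∂μ) + δ := by
        rw [MeasureTheory.integral_add hαint (MeasureTheory.integrable_const δ),
          MeasureTheory.integral_const]
        simp
  calc ∫ x in cc.Jc σ, Metric.infDist x (β : Set ℝ) ^ r ∂μ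
      = ∑ τ : Fin m → Fin cc.N, ∫ x in cc.Jc (σ ++ List.ofFn τ),
          Metric.infDist x (β : Set ℝ) ^ r ∂μ := hsplit
  _ ≤ ∑ τ : Fin m → Fin cc.N,
        (μ (cc.Jc (σ ++ List.ofFn τ))).toReal * (cc.φnorm σ ^ r * (c' τ)^r) :=
      Finset.sum_le_sum (fun τ _ => hint_τ τ)
  _ ≤ ∑ τ : Fin m → Fin cc.N,
        (C₀ * (μ (cc.Jc σ)).toReal * (μ (cc.Jc (List.ofFn τ))).toReal) *
          (cc.φnorm σ ^ r * (c' τ)^r) := by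
      apply Finset.sum_le_sum
      intro τ _
      apply mul_le_mul_of_nonneg_right (hgibbs τ)
      exact mul_nonneg hφr.le (Real.rpow_nonneg (hc'0 τ) r)
  _ = K * ∑ τ : Fin m → Fin cc.N, (μ (cc.Jc (List.ofFn τ))).toReal * (c' τ)^r := by
      rw [Finset.mul_sum]
      apply Finset.sum_congr rfl
      intro τ _
      rw [hK]
      ring
  _ ≤ K * ((∫ y, Metric.infDist y (α:Set ℝ)^r ∂μ) + δ) :=
      mul_le_mul_of_nonneg_left (hsum4.trans hgap2) hK0
  _ = K * (∫ y, Metric.infDist y (α:Set ℝ)^r ∂μ) + K * δ := by ring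

end CookieCutter

theorem Vnr_upper_bound (cc : CookieCutter) (Q : ℝ → ℝ)
    (hQ : ∀ t : ℝ, Filter.Tendsto
      (fun k : ℕ => (1 / (k : ℝ)) * Real.log
        (∑ σ : Fin k → Fin cc.N, cc.φnorm (List.ofFn σ) ^ t))
      Filter.atTop (nhds (Q t)))
    (h : ℝ) (hh0 : 0 < h) (hQh : Q h = 0)
    (μ : MeasureTheory.Measure ℝ) (hμ : cc.IsGibbsLike μ h)
    (Γ : Finset (List (Fin cc.N))) (hΓ : cc.IsFMA Γ)
    (n : ℕ) (hn : Γ.card ≤ n) (r : ℝ) (hr : 0 < r) :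
    ∀ nσ : List (Fin cc.N) → ℕ, (∀ σ ∈ Γ, 1 ≤ nσ σ) → (∑ σ ∈ Γ, nσ σ) ≤ n →
      Vnr μ n r ≤
        cc.Lconst h *
          ∑ σ ∈ Γ, (μ (cc.Jc σ)).toReal * cc.φnorm σ ^ r * Vnr μ (nσ σ) r := by
  intro nσ hnσ1 hnσsum
  classical
  haveI hP : MeasureTheory.IsProbabilityMeasure μ := hμ.1
  have hE0 : μ cc.Eᶜ = 0 := hμ.2.1
  have hae := cc.ae_mem_J01 hE0
  set C₀ : ℝ := (cc.eta h)^3 * cc.xi ^ h with hC₀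
  have hC₀pos : 0 < C₀ :=
    mul_pos (pow_pos (cc.eta_pos h) 3) (Real.rpow_pos_of_pos cc.xi_pos h)
  set w : List (Fin cc.N) → ℝ := fun σ => (μ (cc.Jc σ)).toReal * cc.φnorm σ ^ r with hwdef
  have hw0 : ∀ σ, 0 ≤ w σ := fun σ =>
    mul_nonneg ENNReal.toReal_nonneg (Real.rpow_nonneg (cc.φnorm_pos σ).le r)
  have hmain : ∀ ε : ℝ, 0 < ε →
      Vnr μ n r ≤ (∑ σ ∈ Γ, C₀ * w σ * Vnr μ (nσ σ) r) + (∑ σ ∈ Γ, C₀ * w σ) * ε := by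
    intro ε hε
    have hsel : ∀ σ : List (Fin cc.N), ∃ A : Finset ℝ, A.Nonempty ∧
        (A : Set ℝ) ⊆ Set.Icc (0:ℝ) 1 ∧ A.card ≤ max 1 (nσ σ) ∧
        ∫ x, Metric.infDist x (A : Set ℝ) ^ r ∂μ ≤ Vnr μ (max 1 (nσ σ)) r + ε := by
      intro σ
      obtain ⟨α, hne, hcard, hint⟩ := Vnr_exists_near μ (max 1 (nσ σ)) r (le_max_left _ _) hε
      obtain ⟨a₁, ha₁⟩ := hne
      refine ⟨α.image clampI, Finset.Nonempty.image ⟨a₁, ha₁⟩ _, ?_,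
        Finset.card_image_le.trans hcard, ?_⟩
      · intro x hx
        rw [Finset.coe_image] at hx
        obtain ⟨a, _, rfl⟩ := hx
        exact clampI_mem a
      · have hmono : ∀ᵐ x ∂μ,
            Metric.infDist x ((α.image clampI : Finset ℝ) : Set ℝ) ^ r ≤
              Metric.infDist x (α : Set ℝ) ^ r := by
          filter_upwards [hae] with x hx
          apply Real.rpow_le_rpow Metric.infDist_nonneg _ hr.le
          obtain ⟨a, haα, hda⟩ := exists_infDist_eq (x := x) ⟨a₁, ha₁⟩
          have h1 : Metric.infDist x ((α.image clampI : Finset ℝ) : Set ℝ) ≤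
              dist x (clampI a) :=
            Metric.infDist_le_dist_of_mem
              (by exact_mod_cast Finset.mem_image_of_mem clampI haα)
          exact h1.trans ((dist_clampI hx).trans_eq hda.symm)
        have hint1 : MeasureTheory.Integrable
            (fun x => Metric.infDist x ((α.image clampI : Finset ℝ) : Set ℝ) ^ r) μ := by
          have hm1 : clampI a₁ ∈ ((α.image clampI : Finset ℝ) : Set ℝ) := by
            exact_mod_cast Finset.mem_image_of_mem clampI ha₁
          have := integrable_infDist_rpow hae hm1 hr.le 0 le_rfl
          simpa using this
        have hint2 : MeasureTheory.Integrable
            (fun x => Metric.infDist x (α : Set ℝ) ^ r) μ := by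
          have hm2 : a₁ ∈ (α : Set ℝ) := ha₁
          have := integrable_infDist_rpow hae hm2 hr.le 0 le_rfl
          simpa using this
        calc ∫ x, Metric.infDist x ((α.image clampI : Finset ℝ) : Set ℝ) ^ r ∂μ
            ≤ ∫ x, Metric.infDist x (α : Set ℝ) ^ r ∂μ :=
            MeasureTheory.integral_mono_ae hint1 hint2 hmono
        _ ≤ Vnr μ (max 1 (nσ σ)) r + ε := hint
    choose A hA1 hA2 hA3 hA4 using hsel
    set β : Finset ℝ := Γ.biUnion (fun σ => (A σ).image (cc.wordMap σ)) with hβdef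
    have hΓne := cc.Γ_nonempty hΓ
    have hβne : β.Nonempty := by
      obtain ⟨σ0, hσ0⟩ := hΓne
      obtain ⟨a, ha⟩ := hA1 σ0
      exact ⟨cc.wordMap σ0 a,
        Finset.mem_biUnion.2 ⟨σ0, hσ0, Finset.mem_image_of_mem _ ha⟩⟩
    have hβcard : β.card ≤ n := by
      calc β.card ≤ ∑ σ ∈ Γ, ((A σ).image (cc.wordMap σ)).card := by
            rw [hβdef]
            exact Finset.card_biUnion_le (s := Γ) (t := fun σ : List (Fin cc.N) => (A σ).image (cc.wordMap σ))
      _ ≤ ∑ σ ∈ Γ, nσ σ := by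
          apply Finset.sum_le_sum
          intro σ hσΓ
          have h1 := (Finset.card_image_le (s := A σ) (f := cc.wordMap σ)).trans (hA3 σ)
          rwa [max_eq_right (hnσ1 σ hσΓ)] at h1
      _ ≤ n := hnσsum
    have hV1 : Vnr μ n r ≤ ∫ x, Metric.infDist x (β : Set ℝ) ^ r ∂μ :=
      Vnr_le μ r β hβne hβcard
    obtain ⟨b₀, hb₀⟩ := hβne
    have hβint : MeasureTheory.Integrable
        (fun x => Metric.infDist x (β : Set ℝ) ^ r) μ := by
      have hm0 : b₀ ∈ (β : Set ℝ) := hb₀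
      have := integrable_infDist_rpow hae hm0 hr.le 0 le_rfl
      simpa using this
    have hcovΓ : (Set.univ : Set ℝ) =ᵐ[μ] ⋃ σ ∈ Γ, cc.Jc σ := by
      rw [MeasureTheory.ae_eq_set]
      constructor
      · apply measure_mono_null _ hE0
        rintro x ⟨_, hx2⟩
        intro hxE
        exact hx2 (cc.E_subset_biUnion hΓ hxE)
      · have he : (⋃ σ ∈ Γ, cc.Jc σ) \ Set.univ = ∅ := by simp
        rw [he]
        exact measure_empty
    have hsplitΓ : ∫ x, Metric.infDist x (β : Set ℝ) ^ r ∂μ =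
        ∑ σ ∈ Γ, ∫ x in cc.Jc σ, Metric.infDist x (β : Set ℝ) ^ r ∂μ := by
      rw [← MeasureTheory.setIntegral_univ, MeasureTheory.setIntegral_congr_set hcovΓ]
      exact MeasureTheory.integral_biUnion_finset Γ (fun σ _ => cc.Jc_measurableSet σ)
        (cc.Γ_pairwise_disjoint hΓ) (fun σ _ => hβint.integrableOn)
    have hperσ : ∀ σ ∈ Γ, ∫ x in cc.Jc σ, Metric.infDist x (β : Set ℝ) ^ r ∂μ ≤
        C₀ * w σ * (Vnr μ (nσ σ) r + ε) := by
      intro σ hσΓ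
      have himgsub : (((A σ).image (cc.wordMap σ) : Finset ℝ) : Set ℝ) ⊆ (β : Set ℝ) := by
        intro x hx
        rw [Finset.mem_coe] at hx ⊢
        exact Finset.mem_biUnion.2 ⟨σ, hσΓ, hx⟩
      obtain ⟨aσ, haσ⟩ := hA1 σ
      have himne : (((A σ).image (cc.wordMap σ) : Finset ℝ) : Set ℝ).Nonempty :=
        ⟨cc.wordMap σ aσ, by exact_mod_cast Finset.mem_image_of_mem _ haσ⟩
      have himint : MeasureTheory.Integrable
          (fun x => Metric.infDist x (((A σ).image (cc.wordMap σ) : Finset ℝ) : Set ℝ) ^ r)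
          μ := by
        obtain ⟨p, hp⟩ := himne
        have := integrable_infDist_rpow hae hp hr.le 0 le_rfl
        simpa using this
      have h1 : ∫ x in cc.Jc σ, Metric.infDist x (β : Set ℝ) ^ r ∂μ ≤
          ∫ x in cc.Jc σ,
            Metric.infDist x (((A σ).image (cc.wordMap σ) : Finset ℝ) : Set ℝ) ^ r ∂μ :=
        MeasureTheory.setIntegral_mono_on hβint.integrableOn himint.integrableOn
          (cc.Jc_measurableSet σ)
          (fun x _ => Real.rpow_le_rpow Metric.infDist_nonneg
            (Metric.infDist_le_infDist_of_subset himgsub himne) hr.le)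
      have h2 := cc.core_estimate hh0 hμ hr (hΓ.1 σ hσΓ) (A σ) (hA1 σ) (hA2 σ)
      have h3 : ∫ y, Metric.infDist y ((A σ : Finset ℝ) : Set ℝ) ^ r ∂μ ≤
          Vnr μ (nσ σ) r + ε := by
        have h4 := hA4 σ
        rwa [max_eq_right (hnσ1 σ hσΓ)] at h4
      have h5 : (0:ℝ) ≤ C₀ * (μ (cc.Jc σ)).toReal * cc.φnorm σ ^ r :=
        mul_nonneg (mul_nonneg hC₀pos.le ENNReal.toReal_nonneg)
          (Real.rpow_nonneg (cc.φnorm_pos σ).le r)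
      calc ∫ x in cc.Jc σ, Metric.infDist x (β : Set ℝ) ^ r ∂μ
          ≤ ∫ x in cc.Jc σ,
              Metric.infDist x (((A σ).image (cc.wordMap σ) : Finset ℝ) : Set ℝ) ^ r ∂μ := h1
      _ ≤ C₀ * (μ (cc.Jc σ)).toReal * cc.φnorm σ ^ r *
            (∫ y, Metric.infDist y ((A σ : Finset ℝ) : Set ℝ) ^ r ∂μ) := h2
      _ ≤ C₀ * (μ (cc.Jc σ)).toReal * cc.φnorm σ ^ r * (Vnr μ (nσ σ) r + ε) :=
          mul_le_mul_of_nonneg_left h3 h5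
      _ = C₀ * w σ * (Vnr μ (nσ σ) r + ε) := by
          rw [hwdef]
          ring
    calc Vnr μ n r ≤ ∫ x, Metric.infDist x (β : Set ℝ) ^ r ∂μ := hV1
    _ = ∑ σ ∈ Γ, ∫ x in cc.Jc σ, Metric.infDist x (β : Set ℝ) ^ r ∂μ := hsplitΓ
    _ ≤ ∑ σ ∈ Γ, C₀ * w σ * (Vnr μ (nσ σ) r + ε) := Finset.sum_le_sum hperσ
    _ = (∑ σ ∈ Γ, C₀ * w σ * Vnr μ (nσ σ) r) + (∑ σ ∈ Γ, C₀ * w σ) * ε := by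
        rw [Finset.sum_mul, ← Finset.sum_add_distrib]
        apply Finset.sum_congr rfl
        intro σ _
        ring
  have hfinal : Vnr μ n r ≤ ∑ σ ∈ Γ, C₀ * w σ * Vnr μ (nσ σ) r :=
    aux_le_of_forall_pos
      (Finset.sum_nonneg (fun σ _ => mul_nonneg hC₀pos.le (hw0 σ))) hmain
  refine hfinal.trans ?_
  rw [Finset.mul_sum]
  apply Finset.sum_le_sum
  intro σ _
  have hC₀L : C₀ ≤ cc.Lconst h := by
    rw [hC₀]
    unfold CookieCutter.Lconst
    apply mul_le_mul_of_nonneg_left _ (pow_nonneg (cc.eta_pos h).le 3)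
    apply Real.rpow_le_rpow_of_exponent_le cc.one_le_xi
    linarith
  have hV0 := Vnr_nonneg μ (nσ σ) r
  calc C₀ * w σ * Vnr μ (nσ σ) r ≤ cc.Lconst h * w σ * Vnr μ (nσ σ) r :=
      mul_le_mul_of_nonneg_right (mul_le_mul_of_nonneg_right hC₀L (hw0 σ)) hV0
  _ = cc.Lconst h * ((μ (cc.Jc σ)).toReal * cc.φnorm σ ^ r * Vnr μ (nσ σ) r) := by
      rw [hwdef]
      ring
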